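/- Let n ≥ 2, q ≥ 1 and 0 ≤ k ≤ n−2. Let G = F₀ ⊗ E_k^{(n−2)} (a q^{n−1} × q^n matrix with rows indexed by (z,w) ∈ [q] × [q]^{n−2} and columns indexed by [q]^n). Then Σ_{1 ≤ a < b ≤ n} (G_{a,b})ᵀ G_{a,b} = ((n−k)(n−k−1)/2) · E_k^{(n)}. -/

import Mathlib

noncomputable section

namespace ED

/-- The `q × q` matrix all of whose entries are `1/q`. -/
def E0 (q : ℕ) : Matrix (Fin q) (Fin q) ℝ := Matrix.of fun _ _ => 1 / q

/-- `E₁ = I - E₀`. -/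
def E1 (q : ℕ) : Matrix (Fin q) (Fin q) ℝ :=
  Matrix.of fun x y => (if x = y then 1 else 0) - 1 / q

/-- The projector `E_k^{(m)}` of the Hamming association scheme. -/
def Ek (q m k : ℕ) : Matrix (Fin m → Fin q) (Fin m → Fin q) ℝ :=
  Matrix.of fun x y => ∑ S ∈ Finset.powersetCard k (Finset.univ : Finset (Fin m)),
    ∏ i, (if i ∈ S then E1 q (x i) (y i) else E0 q (x i) (y i))

/-- The `q × q²` matrix with all entries `q^{-3/2}`. -/
def F0 (q : ℕ) : Matrix (Fin q) (Fin q × Fin q) ℝ :=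
  Matrix.of fun _ _ => ((q : ℝ) * Real.sqrt q)⁻¹

/-- The `q × q²` matrix with entries `q^{-1/2}((E₁)_{x,y₁} + (E₁)_{x,y₂})`. -/
def F1 (q : ℕ) : Matrix (Fin q) (Fin q × Fin q) ℝ :=
  Matrix.of fun x y => (Real.sqrt q)⁻¹ * (E1 q x y.1 + E1 q x y.2)

/-- `F = F₀ + F₁`. -/
def FF (q : ℕ) : Matrix (Fin q) (Fin q × Fin q) ℝ := F0 q + F1 q

/-- The increasing enumeration of `[n] \ {a,b}`. -/
def embCompl {n : ℕ} (a b : Fin n) (h : a ≠ b) : Fin (n - 2) → Fin n :=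
  fun i => (({a, b}ᶜ : Finset (Fin n)).orderIsoOfFin
    (by rw [Finset.card_compl, Finset.card_pair h, Fintype.card_fin]) i : Fin n)

/-- For a `q^{n-1} × q^n` matrix `G` (rows indexed by `[q] × [q]^{n-2}`, columns by
`([q] × [q]) × [q]^{n-2}`), the matrix `G_{a,b}` with rows indexed by strings
`x ∈ [q]^n` with `x a = x b`, and columns by `[q]^n`. -/
def subMat {n q : ℕ}
    (G : Matrix (Fin q × (Fin (n - 2) → Fin q)) ((Fin q × Fin q) × (Fin (n - 2) → Fin q)) ℝ)
    (a b : Fin n) (h : a ≠ b) :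
    Matrix {x : Fin n → Fin q // x a = x b} (Fin n → Fin q) ℝ :=
  Matrix.of fun x y =>
    G (x.1 a, fun i => x.1 (embCompl a b h i)) ((y a, y b), fun i => y (embCompl a b h i))

/-- The spectral norm (largest singular value) of a real matrix. -/
def specNorm {m n : Type*} [Fintype m] [Fintype n] [DecidableEq n] (A : Matrix m n ℝ) : ℝ :=
  ‖LinearMap.toContinuousLinearMap (Matrix.toEuclideanLin A)‖

end ED

namespace ED

/-- The tensor product `A ⊗ E_k^{(n-2)}` of a `q × q²` matrix `A` with `E_k^{(n-2)}`:
a `q^{n-1} × q^n` matrix with rows indexed by `[q] × [q]^{n-2}` and columns by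
`([q] × [q]) × [q]^{n-2}`. -/
def tens (n q : ℕ) (A : Matrix (Fin q) (Fin q × Fin q) ℝ) (k : ℕ) :
    Matrix (Fin q × (Fin (n - 2) → Fin q)) ((Fin q × Fin q) × (Fin (n - 2) → Fin q)) ℝ :=
  Matrix.of fun r c => A r.1 c.1 * Ek q (n - 2) k r.2 c.2

end ED


namespace ED
open Matrix

lemma qR_ne {q : ℕ} (hq : 1 ≤ q) : (q:ℝ) ≠ 0 := by positivity

lemma sum_E0_E0 {q : ℕ} (hq : 1 ≤ q) (x y : Fin q) : ∑ z, E0 q x z * E0 q z y = E0 q x y := by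
  have hq' := qR_ne hq
  simp only [E0, Matrix.of_apply, Finset.sum_const, Finset.card_univ, Fintype.card_fin,
    nsmul_eq_mul]
  field_simp

lemma sum_E0_E1 {q : ℕ} (hq : 1 ≤ q) (x y : Fin q) : ∑ z, E0 q x z * E1 q z y = 0 := by
  have hq' := qR_ne hq
  simp only [E0, E1, Matrix.of_apply, mul_sub, Finset.sum_sub_distrib, Finset.sum_const,
    Finset.card_univ, Fintype.card_fin, nsmul_eq_mul, mul_ite, mul_one, mul_zero,
    Finset.sum_ite_eq', Finset.mem_univ, if_true]
  field_simp
  ring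

lemma sum_E1_E0 {q : ℕ} (hq : 1 ≤ q) (x y : Fin q) : ∑ z, E1 q x z * E0 q z y = 0 := by
  have hq' := qR_ne hq
  simp only [E0, E1, Matrix.of_apply, sub_mul, Finset.sum_sub_distrib, Finset.sum_const,
    Finset.card_univ, Fintype.card_fin, nsmul_eq_mul, ite_mul, one_mul, zero_mul,
    Finset.sum_ite_eq, Finset.mem_univ, if_true]
  field_simp
  ring

lemma sum_E1_E1 {q : ℕ} (hq : 1 ≤ q) (x y : Fin q) : ∑ z, E1 q x z * E1 q z y = E1 q x y := by
  have hq' := qR_ne hq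
  simp only [E1, Matrix.of_apply, sub_mul, mul_sub, Finset.sum_sub_distrib, Finset.sum_const,
    Finset.card_univ, Fintype.card_fin, nsmul_eq_mul, ite_mul, one_mul, zero_mul, mul_ite,
    mul_one, mul_zero, Finset.sum_ite_eq, Finset.sum_ite_eq', Finset.mem_univ, if_true]
  field_simp
  ring

lemma E0_symm {q : ℕ} (x y : Fin q) : E0 q x y = E0 q y x := rfl

lemma E1_symm {q : ℕ} (x y : Fin q) : E1 q x y = E1 q y x := by
  simp only [E1, Matrix.of_apply, eq_comm]

lemma Ek_symm {q m k : ℕ} (u v : Fin m → Fin q) : Ek q m k u v = Ek q m k v u := by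
  simp only [Ek, Matrix.of_apply]
  refine Finset.sum_congr rfl fun S _ => Finset.prod_congr rfl fun i _ => ?_
  by_cases hi : i ∈ S
  · simp only [hi, if_true, E1_symm]
  · simp only [hi, if_false, E0_symm]

lemma sum_Ek_Ek {q : ℕ} (hq : 1 ≤ q) (m k : ℕ) (u v : Fin m → Fin q) :
    ∑ w : Fin m → Fin q, Ek q m k u w * Ek q m k w v = Ek q m k u v := by
  classical
  simp only [Ek, Matrix.of_apply]
  have step1 : ∀ w : Fin m → Fin q,
      (∑ S ∈ Finset.powersetCard k (Finset.univ : Finset (Fin m)),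
        ∏ i, (if i ∈ S then E1 q (u i) (w i) else E0 q (u i) (w i))) *
      (∑ T ∈ Finset.powersetCard k (Finset.univ : Finset (Fin m)),
        ∏ i, (if i ∈ T then E1 q (w i) (v i) else E0 q (w i) (v i)))
      = ∑ S ∈ Finset.powersetCard k (Finset.univ : Finset (Fin m)),
        ∑ T ∈ Finset.powersetCard k (Finset.univ : Finset (Fin m)),
        ∏ i, ((if i ∈ S then E1 q (u i) (w i) else E0 q (u i) (w i)) *
          (if i ∈ T then E1 q (w i) (v i) else E0 q (w i) (v i))) := by
    intro w
    rw [Finset.sum_mul_sum]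
    exact Finset.sum_congr rfl fun S _ => Finset.sum_congr rfl fun T _ =>
      (Finset.prod_mul_distrib).symm
  simp only [step1]
  rw [Finset.sum_comm (s := Finset.univ)]
  have step2 : ∀ S T : Finset (Fin m),
      (∑ w : Fin m → Fin q, ∏ i, ((if i ∈ S then E1 q (u i) (w i) else E0 q (u i) (w i)) *
          (if i ∈ T then E1 q (w i) (v i) else E0 q (w i) (v i))))
      = ∏ i, ∑ z : Fin q, ((if i ∈ S then E1 q (u i) z else E0 q (u i) z) *
          (if i ∈ T then E1 q z (v i) else E0 q z (v i))) := by
    intro S T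
    exact (Fintype.prod_sum fun i z => (if i ∈ S then E1 q (u i) z else E0 q (u i) z) *
      (if i ∈ T then E1 q z (v i) else E0 q z (v i))).symm
  refine Finset.sum_congr rfl fun S hS => ?_
  rw [Finset.sum_comm]
  simp only [step2]
  rw [Finset.sum_eq_single_of_mem S hS]
  · refine Finset.prod_congr rfl fun i _ => ?_
    by_cases hi : i ∈ S
    · simp only [hi, if_true]; exact sum_E1_E1 hq _ _
    · simp only [hi, if_false]; exact sum_E0_E0 hq _ _
  · intro T hT hne
    have hcS : S.card = k := (Finset.mem_powersetCard.1 hS).2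
    have hcT : T.card = k := (Finset.mem_powersetCard.1 hT).2
    have hns : ¬ S ⊆ T := fun hsub =>
      hne (Finset.eq_of_subset_of_card_le hsub (by rw [hcS, hcT])).symm
    obtain ⟨i₀, hi₀S, hi₀T⟩ := Finset.not_subset.1 hns
    refine Finset.prod_eq_zero (Finset.mem_univ i₀) ?_
    simp only [hi₀S, if_true, hi₀T, if_false]
    exact sum_E1_E0 hq _ _

lemma card_pair_compl {n : ℕ} (a b : Fin n) (h : a ≠ b) :
    ({a,b}ᶜ : Finset (Fin n)).card = n - 2 := by
  rw [Finset.card_compl, Finset.card_pair h, Fintype.card_fin]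

/-- The order isomorphism underlying `embCompl`. -/
def pairIso {n : ℕ} (a b : Fin n) (h : a ≠ b) : Fin (n-2) ≃o ({a,b}ᶜ : Finset (Fin n)) :=
  ({a,b}ᶜ : Finset (Fin n)).orderIsoOfFin (card_pair_compl a b h)

lemma embCompl_eq {n : ℕ} (a b : Fin n) (h : a ≠ b) (i : Fin (n-2)) :
    embCompl a b h i = (pairIso a b h i : Fin n) := rfl

lemma mem_pair_compl {n : ℕ} (a b : Fin n) (j : Fin n) :
    j ∈ ({a,b}ᶜ : Finset (Fin n)) ↔ j ≠ a ∧ j ≠ b := by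
  simp [not_or]

lemma embCompl_mem {n : ℕ} (a b : Fin n) (h : a ≠ b) (i : Fin (n-2)) :
    embCompl a b h i ∈ ({a,b}ᶜ : Finset (Fin n)) :=
  (pairIso a b h i).2

lemma embCompl_inj {n : ℕ} (a b : Fin n) (h : a ≠ b) :
    Function.Injective (embCompl a b h) := fun _ _ hij =>
  (pairIso a b h).injective (Subtype.ext hij)

lemma embCompl_image_univ {n : ℕ} (a b : Fin n) (h : a ≠ b) :
    Finset.univ.image (embCompl a b h) = ({a,b}ᶜ : Finset (Fin n)) := by
  apply Finset.eq_of_subset_of_card_le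
  · intro j hj
    obtain ⟨i, _, rfl⟩ := Finset.mem_image.1 hj
    exact embCompl_mem a b h i
  · rw [card_pair_compl a b h, Finset.card_image_of_injective _ (embCompl_inj a b h),
      Finset.card_univ, Fintype.card_fin]

lemma embCompl_symm_apply {n : ℕ} (a b : Fin n) (h : a ≠ b) (j : Fin n)
    (hj : j ∈ ({a,b}ᶜ : Finset (Fin n))) :
    embCompl a b h ((pairIso a b h).symm ⟨j, hj⟩) = j := by
  rw [embCompl_eq, OrderIso.apply_symm_apply]

lemma pairIso_symm_embCompl {n : ℕ} (a b : Fin n) (h : a ≠ b) (i : Fin (n-2)) :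
    (pairIso a b h).symm ⟨embCompl a b h i, embCompl_mem a b h i⟩ = i := by
  have heq : (⟨embCompl a b h i, embCompl_mem a b h i⟩ : ({a,b}ᶜ : Finset (Fin n)))
      = pairIso a b h i := Subtype.ext rfl
  rw [heq, OrderIso.symm_apply_apply]

lemma a_not_mem_pair_compl {n : ℕ} (a b : Fin n) : a ∉ ({a,b}ᶜ : Finset (Fin n)) := by
  simp [mem_pair_compl]

lemma b_not_mem_pair_compl {n : ℕ} (a b : Fin n) : b ∉ ({a,b}ᶜ : Finset (Fin n)) := by
  simp [mem_pair_compl]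

/-- Strings with `x a = x b` are parametrized by the common value and the rest. -/
def diagEquiv {n : ℕ} (a b : Fin n) (h : a ≠ b) (q : ℕ) :
    {x : Fin n → Fin q // x a = x b} ≃ Fin q × (Fin (n-2) → Fin q) where
  toFun x := (x.1 a, fun i => x.1 (embCompl a b h i))
  invFun p := ⟨fun j => if hj : j ∈ ({a,b}ᶜ : Finset (Fin n))
      then p.2 ((pairIso a b h).symm ⟨j, hj⟩) else p.1, by
    simp only [dif_neg (a_not_mem_pair_compl a b), dif_neg (b_not_mem_pair_compl a b)]⟩
  left_inv x := by
    apply Subtype.ext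
    funext j
    by_cases hj : j ∈ ({a,b}ᶜ : Finset (Fin n))
    · simp only [dif_pos hj]
      conv_rhs => rw [← embCompl_symm_apply a b h j hj]
    · simp only [dif_neg hj]
      rcases not_and_or.1 ((mem_pair_compl a b j).not.1 hj) with hja | hjb
      · rw [not_ne_iff.1 hja]
      · rw [not_ne_iff.1 hjb, ← x.2]
  right_inv p := by
    refine Prod.ext ?_ ?_
    · simp only [dif_neg (a_not_mem_pair_compl a b)]
    · funext i
      simp only [dif_pos (embCompl_mem a b h i), pairIso_symm_embCompl]

lemma entry_eq {n q : ℕ} (k : ℕ) (hq : 1 ≤ q) (a b : Fin n) (h : a ≠ b)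
    (y y' : Fin n → Fin q) :
    ((subMat (tens n q (F0 q) k) a b h)ᵀ * subMat (tens n q (F0 q) k) a b h) y y'
      = (q:ℝ)⁻¹ * ((q:ℝ)⁻¹ * Ek q (n-2) k (fun i => y (embCompl a b h i))
          (fun i => y' (embCompl a b h i))) := by
  have hq' := qR_ne hq
  set c : ℝ := ((q : ℝ) * Real.sqrt q)⁻¹ with hc
  set u := fun i => y (embCompl a b h i)
  set v := fun i => y' (embCompl a b h i)
  rw [Matrix.mul_apply]
  simp only [Matrix.transpose_apply, subMat, tens, F0, Matrix.of_apply]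
  rw [← Equiv.sum_comp (diagEquiv a b h q).symm]
  have hw : ∀ p : Fin q × (Fin (n-2) → Fin q),
      (fun i => ((diagEquiv a b h q).symm p).1 (embCompl a b h i)) = p.2 :=
    fun p => congrArg Prod.snd ((diagEquiv a b h q).apply_symm_apply p)
  simp only [hw]
  rw [Fintype.sum_prod_type]
  simp only [Finset.sum_const, Finset.card_univ, Fintype.card_fin, nsmul_eq_mul]
  have hterm : ∀ w : Fin (n-2) → Fin q,
      c * Ek q (n-2) k w u * (c * Ek q (n-2) k w v)
        = (c * c) * (Ek q (n-2) k u w * Ek q (n-2) k w v) := by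
    intro w; rw [Ek_symm w u]; ring
  rw [Finset.sum_congr rfl fun w _ => hterm w]
  rw [← Finset.mul_sum, sum_Ek_Ek hq]
  have hsq : Real.sqrt q * Real.sqrt q = (q:ℝ) := Real.mul_self_sqrt (by positivity)
  rw [hc]
  field_simp
  linear_combination (-(Ek q (n-2) k u v)) * hsq

lemma count_pairs {n : ℕ} (s : Finset (Fin n)) :
    (∑ a : Fin n, ∑ b : Fin n, if a < b ∧ a ∈ s ∧ b ∈ s then (1:ℝ) else 0)
      = (s.card : ℝ) * ((s.card : ℝ) - 1) / 2 := by
  classical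
  set N := ∑ a : Fin n, ∑ b : Fin n, if a < b ∧ a ∈ s ∧ b ∈ s then (1:ℝ) else 0 with hN
  have key : N + N = (s.card : ℝ) * ((s.card : ℝ) - 1) := by
    have hswap : N = ∑ a : Fin n, ∑ b : Fin n,
        if b < a ∧ b ∈ s ∧ a ∈ s then (1:ℝ) else 0 := by
      rw [hN, Finset.sum_comm]
    calc N + N
        = (∑ a : Fin n, ∑ b : Fin n, if a < b ∧ a ∈ s ∧ b ∈ s then (1:ℝ) else 0)
          + (∑ a : Fin n, ∑ b : Fin n, if b < a ∧ b ∈ s ∧ a ∈ s then (1:ℝ) else 0) := by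
          rw [← hN, ← hswap]
      _ = ∑ a : Fin n, ∑ b : Fin n, ((if a < b ∧ a ∈ s ∧ b ∈ s then (1:ℝ) else 0)
            + (if b < a ∧ b ∈ s ∧ a ∈ s then (1:ℝ) else 0)) := by
          rw [← Finset.sum_add_distrib]
          exact Finset.sum_congr rfl fun a _ => (Finset.sum_add_distrib).symm
      _ = ∑ a : Fin n, ∑ b : Fin n, (if a ≠ b ∧ a ∈ s ∧ b ∈ s then (1:ℝ) else 0) := by
          refine Finset.sum_congr rfl fun a _ => Finset.sum_congr rfl fun b _ => ?_
          by_cases ha : a ∈ s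
          · by_cases hb : b ∈ s
            · rcases lt_trichotomy a b with hab | hab | hab
              · simp [hab, hab.ne, not_lt_of_gt hab, ha, hb]
              · simp [hab, lt_irrefl]
              · simp [hab, hab.ne', not_lt_of_gt hab, ha, hb]
            · simp [hb]
          · simp [ha]
      _ = ∑ a : Fin n, (if a ∈ s then ((s.erase a).card : ℝ) else 0) := by
          refine Finset.sum_congr rfl fun a _ => ?_
          by_cases ha : a ∈ s
          · have hbb : ∀ b : Fin n, (if a ≠ b ∧ a ∈ s ∧ b ∈ s then (1:ℝ) else 0)
                = (if b ∈ s.erase a then (1:ℝ) else 0) := by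
              intro b
              have hiff : (a ≠ b ∧ a ∈ s ∧ b ∈ s) ↔ (b ∈ s.erase a) := by
                rw [Finset.mem_erase]
                constructor
                · rintro ⟨hne, -, hb⟩; exact ⟨hne.symm, hb⟩
                · rintro ⟨hne, hb⟩; exact ⟨hne.symm, ha, hb⟩
              rw [if_congr hiff rfl rfl]
            rw [if_pos ha]
            simp only [hbb]
            rw [Finset.sum_ite_mem, Finset.univ_inter, Finset.sum_const, nsmul_eq_mul, mul_one]
          · simp [ha]
      _ = (s.card : ℝ) * ((s.card : ℝ) - 1) := by
          rw [Finset.sum_ite_mem, Finset.univ_inter]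
          have : ∀ a ∈ s, ((s.erase a).card : ℝ) = (s.card : ℝ) - 1 := by
            intro a ha
            rw [Finset.card_erase_of_mem ha, Nat.cast_sub (Finset.card_pos.2 ⟨a, ha⟩)]
            simp
          rw [Finset.sum_congr rfl this, Finset.sum_const, nsmul_eq_mul]
  linarith

lemma pair_term {n q : ℕ} (k : ℕ) (hq : 1 ≤ q) (a b : Fin n) (h : a ≠ b)
    (y y' : Fin n → Fin q) :
    (q:ℝ)⁻¹ * ((q:ℝ)⁻¹ * Ek q (n-2) k (fun i => y (embCompl a b h i))
        (fun i => y' (embCompl a b h i)))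
      = ∑ T ∈ Finset.powersetCard k (Finset.univ : Finset (Fin n)),
          if a ∉ T ∧ b ∉ T then
            (∏ j, if j ∈ T then E1 q (y j) (y' j) else E0 q (y j) (y' j)) else 0 := by
  classical
  rw [← Finset.sum_filter]
  have hfilter : (Finset.powersetCard k (Finset.univ : Finset (Fin n))).filter
      (fun T => a ∉ T ∧ b ∉ T) = Finset.powersetCard k ({a,b}ᶜ : Finset (Fin n)) := by
    ext T
    simp only [Finset.mem_filter, Finset.mem_powersetCard, Finset.subset_univ, true_and]
    constructor
    · rintro ⟨hTk, haT, hbT⟩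
      refine ⟨fun j hj => (mem_pair_compl a b j).2 ⟨?_, ?_⟩, hTk⟩
      · rintro rfl; exact haT hj
      · rintro rfl; exact hbT hj
    · rintro ⟨hsub, hTk⟩
      exact ⟨hTk, fun haT => ((mem_pair_compl a b a).1 (hsub haT)).1 rfl,
        fun hbT => ((mem_pair_compl a b b).1 (hsub hbT)).2 rfl⟩
  rw [hfilter]
  simp only [Ek, Matrix.of_apply, Finset.mul_sum]
  refine Finset.sum_bij (fun S' _ => S'.image (embCompl a b h)) ?_ ?_ ?_ ?_
  · intro S' hS'
    rw [Finset.mem_powersetCard]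
    refine ⟨fun j hj => ?_, ?_⟩
    · obtain ⟨i, _, rfl⟩ := Finset.mem_image.1 hj
      exact embCompl_mem a b h i
    · rw [Finset.card_image_of_injective _ (embCompl_inj a b h)]
      exact (Finset.mem_powersetCard.1 hS').2
  · intro S₁ _ S₂ _ heq
    exact Finset.image_injective (embCompl_inj a b h) heq
  · intro T hT
    obtain ⟨hsub, hTk⟩ := Finset.mem_powersetCard.1 hT
    have himg : (Finset.univ.filter (fun i => embCompl a b h i ∈ T)).image
        (embCompl a b h) = T := by
      ext j
      constructor
      · intro hj
        obtain ⟨i, hi, rfl⟩ := Finset.mem_image.1 hj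
        exact (Finset.mem_filter.1 hi).2
      · intro hj
        have hjC := hsub hj
        refine Finset.mem_image.2 ⟨(pairIso a b h).symm ⟨j, hjC⟩, ?_,
          embCompl_symm_apply a b h j hjC⟩
        rw [Finset.mem_filter]
        exact ⟨Finset.mem_univ _, by rw [embCompl_symm_apply a b h j hjC]; exact hj⟩
    refine ⟨_, ?_, himg⟩
    rw [Finset.mem_powersetCard]
    refine ⟨Finset.subset_univ _, ?_⟩
    have hcard : T.card = (Finset.univ.filter (fun i => embCompl a b h i ∈ T)).card := by
      conv_lhs => rw [← himg]
      rw [Finset.card_image_of_injective _ (embCompl_inj a b h)]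
    rw [← hcard, hTk]
  · intro S' hS'
    rw [← Finset.prod_mul_prod_compl ({a,b} : Finset (Fin n)), Finset.prod_pair h]
    have haT : a ∉ S'.image (embCompl a b h) := fun hmem => by
      obtain ⟨i, _, heq⟩ := Finset.mem_image.1 hmem
      have hm := embCompl_mem a b h i
      rw [heq] at hm
      exact a_not_mem_pair_compl a b hm
    have hbT : b ∉ S'.image (embCompl a b h) := fun hmem => by
      obtain ⟨i, _, heq⟩ := Finset.mem_image.1 hmem
      have hm := embCompl_mem a b h i
      rw [heq] at hm
      exact b_not_mem_pair_compl a b hm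
    rw [if_neg haT, if_neg hbT]
    have hprodC : (∏ j ∈ ({a,b}ᶜ : Finset (Fin n)),
        if j ∈ S'.image (embCompl a b h) then E1 q (y j) (y' j) else E0 q (y j) (y' j))
        = ∏ i, (if i ∈ S' then E1 q (y (embCompl a b h i)) (y' (embCompl a b h i))
            else E0 q (y (embCompl a b h i)) (y' (embCompl a b h i))) := by
      rw [← embCompl_image_univ a b h,
        Finset.prod_image (fun x _ z _ hxz => embCompl_inj a b h hxz)]
      refine Finset.prod_congr rfl fun i _ => ?_
      have hmemiff : embCompl a b h i ∈ S'.image (embCompl a b h) ↔ i ∈ S' := by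
        simp [Finset.mem_image, (embCompl_inj a b h).eq_iff]
      rw [if_congr hmemiff rfl rfl]
    rw [hprodC]
    simp only [E0, Matrix.of_apply, one_div]
    ring

end ED

open Matrix ED in
/-- For `G = F₀ ⊗ E_k^{(n−2)}`, one has
`Σ_{1 ≤ a < b ≤ n} (G_{a,b})ᵀ G_{a,b} = ((n−k)(n−k−1)/2) · E_k^{(n)}`. -/
theorem stmt4 (n q k : ℕ) (hn : 2 ≤ n) (hq : 1 ≤ q) (hk : k ≤ n - 2) :
    (∑ a : Fin n, ∑ b : Fin n,
        if h : a < b then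
          (subMat (tens n q (F0 q) k) a b h.ne)ᵀ * subMat (tens n q (F0 q) k) a b h.ne
        else 0)
      = (((n : ℝ) - k) * ((n : ℝ) - k - 1) / 2) • Ek q n k := by
  classical
  have hkn : k ≤ n := le_trans hk (Nat.sub_le n 2)
  ext y y'
  simp only [Matrix.sum_apply]
  have hterm : ∀ a b : Fin n,
      ((if h : a < b then
          (subMat (tens n q (F0 q) k) a b h.ne)ᵀ * subMat (tens n q (F0 q) k) a b h.ne
        else 0) : Matrix (Fin n → Fin q) (Fin n → Fin q) ℝ) y y'
      = ∑ T ∈ Finset.powersetCard k (Finset.univ : Finset (Fin n)),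
          (if a < b ∧ a ∈ Tᶜ ∧ b ∈ Tᶜ then
            (∏ j, if j ∈ T then E1 q (y j) (y' j) else E0 q (y j) (y' j)) else 0) := by
    intro a b
    by_cases hab : a < b
    · rw [dif_pos hab, entry_eq k hq a b hab.ne, pair_term k hq a b hab.ne]
      refine Finset.sum_congr rfl fun T _ => ?_
      have : (a ∉ T ∧ b ∉ T) ↔ (a < b ∧ a ∈ Tᶜ ∧ b ∈ Tᶜ) := by
        simp [Finset.mem_compl, hab]
      rw [if_congr this rfl rfl]
    · rw [dif_neg hab]
      simp only [Matrix.zero_apply]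
      symm
      refine Finset.sum_eq_zero fun T _ => ?_
      simp [hab]
  simp only [hterm]
  have hswap : ∀ a : Fin n,
      (∑ b : Fin n, ∑ T ∈ Finset.powersetCard k (Finset.univ : Finset (Fin n)),
        (if a < b ∧ a ∈ Tᶜ ∧ b ∈ Tᶜ then
          (∏ j, if j ∈ T then E1 q (y j) (y' j) else E0 q (y j) (y' j)) else 0))
      = ∑ T ∈ Finset.powersetCard k (Finset.univ : Finset (Fin n)), ∑ b : Fin n,
        (if a < b ∧ a ∈ Tᶜ ∧ b ∈ Tᶜ then
          (∏ j, if j ∈ T then E1 q (y j) (y' j) else E0 q (y j) (y' j)) else 0) :=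
    fun a => Finset.sum_comm
  simp only [hswap]
  rw [Finset.sum_comm]
  have hTterm : ∀ T ∈ Finset.powersetCard k (Finset.univ : Finset (Fin n)),
      (∑ a : Fin n, ∑ b : Fin n,
        (if a < b ∧ a ∈ Tᶜ ∧ b ∈ Tᶜ then
          (∏ j, if j ∈ T then E1 q (y j) (y' j) else E0 q (y j) (y' j)) else 0))
      = (((n : ℝ) - k) * ((n : ℝ) - k - 1) / 2) *
          (∏ j, if j ∈ T then E1 q (y j) (y' j) else E0 q (y j) (y' j)) := by
    intro T hT
    have hPc : ∀ a b : Fin n,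
        (if a < b ∧ a ∈ Tᶜ ∧ b ∈ Tᶜ then
          (∏ j, if j ∈ T then E1 q (y j) (y' j) else E0 q (y j) (y' j)) else 0)
        = (if a < b ∧ a ∈ Tᶜ ∧ b ∈ Tᶜ then (1:ℝ) else 0) *
          (∏ j, if j ∈ T then E1 q (y j) (y' j) else E0 q (y j) (y' j)) := by
      intro a b
      by_cases hc : a < b ∧ a ∈ Tᶜ ∧ b ∈ Tᶜ <;> simp [hc]
    simp only [hPc, ← Finset.sum_mul]
    rw [count_pairs]
    have hcc : ((Tᶜ : Finset (Fin n)).card : ℝ) = (n : ℝ) - k := by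
      rw [Finset.card_compl, (Finset.mem_powersetCard.1 hT).2, Fintype.card_fin,
        Nat.cast_sub hkn]
    rw [hcc]
  rw [Finset.sum_congr rfl hTterm, ← Finset.mul_sum]
  simp only [Matrix.smul_apply, smul_eq_mul, Ek, Matrix.of_apply]
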